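/- For every n ≥ 1, every k ≥ 2, every ℓ ≥ 1, every assignment g : Fin n → Fin ℓ of bidders to expertise groups, and every shared-quality instance (valuations v_i(s) = f_i(q(s)) where q_j(s) = ∑_{i' : g(i')=j} s_{i'} and each f_i : ℕ^ℓ → ℝ is nonnegative and weakly increasing in every coordinate), there exists a mechanism (x, p) that is ex-post incentive compatible and ex-post individually rational and whose revenue 10(k−1)ℓ-approximates the optimal welfare, i.e., for every signal profile s, ∑_i p_i(s) ≥ (1/(10(k−1)ℓ))·max_i v_i(s). -/

import Mathlib

open Finset

namespace SQaux

/-- group-quality vector -/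
def qv {n k ℓ : ℕ} (g : Fin n → Fin ℓ) (s : Fin n → Fin k) (j : Fin ℓ) : ℕ :=
  ∑ i' ∈ Finset.univ.filter (fun i' => g i' = j), (s i' : ℕ)

lemma qv_update {n k ℓ : ℕ} (g : Fin n → Fin ℓ) (s : Fin n → Fin k)
    (i : Fin n) (θ : Fin k) (j : Fin ℓ) :
    qv g (Function.update s i θ) j + (if g i = j then (s i : ℕ) else 0)
      = qv g s j + (if g i = j then (θ : ℕ) else 0) := by
  unfold qv
  by_cases h : g i = j
  · have hi : i ∈ Finset.univ.filter (fun i' => g i' = j) := by simp [h]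
    rw [← Finset.add_sum_erase _ _ hi, ← Finset.add_sum_erase _ (fun i' => ((s i' : ℕ))) hi]
    have hcongr : ∑ x ∈ (Finset.univ.filter (fun i' => g i' = j)).erase i,
        ((Function.update s i θ x : Fin k) : ℕ)
        = ∑ x ∈ (Finset.univ.filter (fun i' => g i' = j)).erase i, (s x : ℕ) := by
      refine Finset.sum_congr rfl ?_
      intro x hx
      rw [Function.update_of_ne (Finset.ne_of_mem_erase hx)]
    rw [hcongr]
    simp [h, Function.update_self]
    ring
  · have hcongr : ∑ x ∈ (Finset.univ.filter (fun i' => g i' = j)),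
        ((Function.update s i θ x : Fin k) : ℕ)
        = ∑ x ∈ (Finset.univ.filter (fun i' => g i' = j)), (s x : ℕ) := by
      refine Finset.sum_congr rfl ?_
      intro x hx
      have hxj : g x = j := by simpa using hx
      have : x ≠ i := by rintro rfl; exact h hxj
      rw [Function.update_of_ne this]
    simp [h, hcongr]

lemma qv_update_mono {n k ℓ : ℕ} (g : Fin n → Fin ℓ) (s : Fin n → Fin k)
    (i : Fin n) {θ θ' : Fin k} (h : θ ≤ θ') :
    qv g (Function.update s i θ) ≤ qv g (Function.update s i θ') := by
  intro j
  unfold qv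
  refine Finset.sum_le_sum ?_
  intro x _
  by_cases hx : x = i
  · subst hx
    simp only [Function.update_self]
    exact h
  · rw [Function.update_of_ne hx, Function.update_of_ne hx]

end SQaux


/-- For every `n ≥ 1`, `k ≥ 2`, `ℓ ≥ 1`, group assignment `g`, and every
shared-quality instance (valuations `v i s = f i (q s)` with
`q s j = ∑_{i' : g i' = j} s i'` and each `f i` nonnegative and weakly increasing in
every coordinate), there exists an ex-post IC and ex-post IR mechanism `(x, p)` whose
revenue 10(k-1)ℓ-approximates the optimal welfare. -/
theorem shared_quality_groups_revenue_approx
    (n k ℓ : ℕ) (hn : 1 ≤ n) (hk : 2 ≤ k) (hℓ : 1 ≤ ℓ)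
    (g : Fin n → Fin ℓ)
    (f : Fin n → (Fin ℓ → ℕ) → ℝ)
    (hf_nonneg : ∀ i q, 0 ≤ f i q)
    (hf_mono : ∀ i, Monotone (f i))
    (v : Fin n → (Fin n → Fin k) → ℝ)
    (hv : ∀ i s, v i s =
      f i (fun j => ∑ i' ∈ Finset.univ.filter (fun i' => g i' = j), (s i' : ℕ))) :
    ∃ x p : (Fin n → Fin k) → Fin n → ℝ,
      (∀ s i, 0 ≤ x s i) ∧ (∀ s, ∑ i, x s i ≤ 1) ∧
      (∀ s i, 0 ≤ p s i) ∧
      (∀ (i : Fin n) (s : Fin n → Fin k) (t : Fin k),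
        x s i * v i s - p s i ≥
          x (Function.update s i t) i * v i s - p (Function.update s i t) i) ∧
      (∀ (i : Fin n) (s : Fin n → Fin k), x s i * v i s - p s i ≥ 0) ∧
      (∀ s : Fin n → Fin k,
        ∑ i, p s i ≥
          (1 / (10 * ((k : ℝ) - 1) * (ℓ : ℝ))) *
            Finset.univ.sup' ⟨⟨0, hn⟩, Finset.mem_univ _⟩ (fun i => v i s)) := by
  classical
  have hv' : ∀ i s, v i s = f i (SQaux.qv g s) := hv
  have hk0 : (0:ℝ) < (k:ℝ) := by
    have : (2:ℝ) ≤ (k:ℝ) := by exact_mod_cast hk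
    linarith
  have hl0 : (0:ℝ) < (ℓ:ℝ) := by
    have : (1:ℝ) ≤ (ℓ:ℝ) := by exact_mod_cast hℓ
    linarith
  set β : ℝ := 1 / ((k : ℝ) * (ℓ : ℝ)) with hβdef
  have hβpos : 0 < β := by positivity
  -- argmax selector
  obtain ⟨A, hA⟩ : ∃ A : (Fin ℓ → ℕ) → Fin n, ∀ Q i, f i Q ≤ f (A Q) Q := by
    have hne : (Finset.univ : Finset (Fin n)).Nonempty := ⟨⟨0, hn⟩, Finset.mem_univ _⟩
    refine ⟨fun Q => (Finset.exists_max_image Finset.univ (fun i => f i Q) hne).choose,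
      fun Q i => ?_⟩
    have := (Finset.exists_max_image Finset.univ (fun i => f i Q) hne).choose_spec
    exact this.2 i (Finset.mem_univ i)
  -- candidate sets
  set T : (Fin n → Fin k) → Fin n → Fin k → Finset (Fin k) :=
    fun s i b => Finset.univ.filter
      (fun θ => θ ≤ b ∧ A (SQaux.qv g (Function.update s i θ)) = i) with hT
  set S : (Fin n → Fin k) → Fin n → Finset (Fin k) := fun s i => T s i (s i) with hS
  have hSupd : ∀ (s : Fin n → Fin k) (i : Fin n) (t : Fin k),
      S (Function.update s i t) i = T s i t := by
    intro s i t
    rw [hS, hT]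
    refine Finset.filter_congr ?_
    intro θ _
    rw [Function.update_self, Function.update_idem]
  refine ⟨fun s i => β * ((S s i).card : ℝ),
    fun s i => β * ∑ θ ∈ S s i, f i (SQaux.qv g (Function.update s i θ)),
    ?_, ?_, ?_, ?_, ?_, ?_⟩
  · intro s i; positivity
  · -- budget feasibility
    intro s
    rw [← Finset.mul_sum]
    have hcard : ∑ i, ((S s i).card : ℝ)
        = (((Finset.univ : Finset (Fin n)).sigma (fun i => S s i)).card : ℝ) := by
      rw [Finset.card_sigma]
      push_cast
      rfl
    have hinj : (((Finset.univ : Finset (Fin n)).sigma (fun i => S s i)).card : ℕ)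
        ≤ ((Finset.univ : Finset (Fin ℓ)) ×ˢ Finset.range k).card := by
      refine Finset.card_le_card_of_injOn
        (fun a => (g a.1, (s a.1 : ℕ) - (a.2 : ℕ))) ?_ ?_
      · rintro ⟨i, θ⟩ hmem
        rw [Finset.mem_coe, Finset.mem_sigma] at hmem
        have hθ : θ ∈ S s i := hmem.2
        rw [hS, hT, Finset.mem_filter] at hθ
        rw [Finset.mem_coe]
        refine Finset.mem_product.2 ⟨Finset.mem_univ _, Finset.mem_range.2 ?_⟩
        show (s i : ℕ) - (θ : ℕ) < k
        have : (s i : ℕ) < k := (s i).isLt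
        omega
      · rintro ⟨i, θ⟩ ha ⟨i', θ'⟩ hb heq
        simp only [Finset.coe_sigma, Set.mem_sigma_iff] at ha hb
        have hθ : θ ∈ S s i := ha.2
        have hθ' : θ' ∈ S s i' := hb.2
        rw [hS, hT, Finset.mem_filter] at hθ hθ'
        obtain ⟨-, hle, hAi⟩ := hθ
        obtain ⟨-, hle', hAi'⟩ := hθ'
        have heq' : ((g i, (s i : ℕ) - (θ:ℕ)) : Fin ℓ × ℕ)
            = (g i', (s i' : ℕ) - (θ':ℕ)) := heq
        have hgg : g i = g i' := congrArg Prod.fst heq'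
        have hd : (s i : ℕ) - (θ:ℕ) = (s i' : ℕ) - (θ':ℕ) := congrArg Prod.snd heq'
        have hle1 : (θ:ℕ) ≤ (s i : ℕ) := Fin.le_def.1 hle
        have hle2 : (θ':ℕ) ≤ (s i' : ℕ) := Fin.le_def.1 hle'
        have hqeq : SQaux.qv g (Function.update s i θ)
            = SQaux.qv g (Function.update s i' θ') := by
          funext j
          have e1 := SQaux.qv_update g s i θ j
          have e2 := SQaux.qv_update g s i' θ' j
          by_cases hj : g i = j
          · rw [if_pos hj] at e1
            rw [if_pos (hgg ▸ hj)] at e2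
            rw [if_pos hj] at e1
            rw [if_pos (hgg ▸ hj)] at e2
            omega
          · rw [if_neg hj, if_neg hj] at e1
            rw [if_neg (hgg ▸ hj), if_neg (hgg ▸ hj)] at e2
            omega
        have hii : i = i' := by rw [← hAi, ← hAi', hqeq]
        subst hii
        have : θ = θ' := by
          apply Fin.ext
          omega
        subst this
        rfl
    have hcard2 : (((Finset.univ : Finset (Fin ℓ)) ×ˢ Finset.range k).card : ℕ)
        = ℓ * k := by
      rw [Finset.card_product, Finset.card_range, Finset.card_univ, Fintype.card_fin]
    calc β * ∑ i, ((S s i).card : ℝ)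
        ≤ β * ((ℓ : ℝ) * (k : ℝ)) := by
          refine mul_le_mul_of_nonneg_left ?_ (le_of_lt hβpos)
          rw [hcard]
          have := hcard2 ▸ hinj
          exact_mod_cast this
      _ = 1 := by
          rw [hβdef]
          field_simp
  · -- payments nonneg
    intro s i
    exact mul_nonneg hβpos.le (Finset.sum_nonneg fun θ _ => hf_nonneg _ _)
  · -- ex-post IC
    intro i s t
    beta_reduce
    have key : ∀ b : Fin k,
        β * ((T s i b).card : ℝ) * v i s
          - β * ∑ θ ∈ T s i b, f i (SQaux.qv g (Function.update s i θ))
        = β * ∑ θ ∈ T s i b, (v i s - f i (SQaux.qv g (Function.update s i θ))) := by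
      intro b
      rw [Finset.sum_sub_distrib, Finset.sum_const, nsmul_eq_mul]
      ring
    have hterm_lo : ∀ θ : Fin k, θ ≤ s i →
        0 ≤ v i s - f i (SQaux.qv g (Function.update s i θ)) := by
      intro θ hθ
      have : f i (SQaux.qv g (Function.update s i θ))
          ≤ f i (SQaux.qv g (Function.update s i (s i))) :=
        hf_mono i (SQaux.qv_update_mono g s i hθ)
      rw [Function.update_eq_self] at this
      rw [hv' i s]
      linarith
    have hterm_hi : ∀ θ : Fin k, s i ≤ θ →
        v i s - f i (SQaux.qv g (Function.update s i θ)) ≤ 0 := by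
      intro θ hθ
      have : f i (SQaux.qv g (Function.update s i (s i)))
          ≤ f i (SQaux.qv g (Function.update s i θ)) :=
        hf_mono i (SQaux.qv_update_mono g s i hθ)
      rw [Function.update_eq_self] at this
      rw [hv' i s]
      linarith
    have hSeq : S s i = T s i (s i) := by rw [hS]
    have hpupd : ∑ θ ∈ S (Function.update s i t) i,
          f i (SQaux.qv g (Function.update (Function.update s i t) i θ))
        = ∑ θ ∈ T s i t, f i (SQaux.qv g (Function.update s i θ)) := by
      rw [hSupd]
      refine Finset.sum_congr rfl ?_
      intro θ _
      rw [Function.update_idem]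
    rw [ge_iff_le, hpupd, hSupd, hSeq, key, key]
    refine mul_le_mul_of_nonneg_left ?_ hβpos.le
    set term : Fin k → ℝ := fun θ => v i s - f i (SQaux.qv g (Function.update s i θ))
      with hterm
    calc ∑ θ ∈ T s i t, term θ
        = ∑ θ ∈ T s i t ∩ T s i (s i), term θ
            + ∑ θ ∈ T s i t \ T s i (s i), term θ :=
          (Finset.sum_inter_add_sum_sdiff _ _ _).symm
      _ ≤ ∑ θ ∈ T s i t ∩ T s i (s i), term θ + 0 := by
          refine add_le_add_right (Finset.sum_nonpos ?_) _
          intro θ hθ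
          rw [Finset.mem_sdiff] at hθ
          obtain ⟨hθt, hθs⟩ := hθ
          rw [hT, Finset.mem_filter] at hθt hθs
          push_neg at hθs
          have hA' : A (SQaux.qv g (Function.update s i θ)) = i := hθt.2.2
          have : ¬ θ ≤ s i := fun hc => (hθs (Finset.mem_univ _) hc) hA'
          exact hterm_hi θ (le_of_not_ge this)
      _ = ∑ θ ∈ T s i t ∩ T s i (s i), term θ := add_zero _
      _ ≤ ∑ θ ∈ T s i (s i), term θ := by
          refine Finset.sum_le_sum_of_subset_of_nonneg Finset.inter_subset_right ?_
          intro θ hθ _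
          rw [hT, Finset.mem_filter] at hθ
          exact hterm_lo θ hθ.2.1
  · -- ex-post IR
    intro i s
    beta_reduce
    have key : β * ((S s i).card : ℝ) * v i s
          - β * ∑ θ ∈ S s i, f i (SQaux.qv g (Function.update s i θ))
        = β * ∑ θ ∈ S s i, (v i s - f i (SQaux.qv g (Function.update s i θ))) := by
      rw [Finset.sum_sub_distrib, Finset.sum_const, nsmul_eq_mul]
      ring
    rw [ge_iff_le, key]
    refine mul_nonneg hβpos.le (Finset.sum_nonneg ?_)
    intro θ hθ
    rw [hS, hT, Finset.mem_filter] at hθ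
    have : f i (SQaux.qv g (Function.update s i θ))
        ≤ f i (SQaux.qv g (Function.update s i (s i))) :=
      hf_mono i (SQaux.qv_update_mono g s i hθ.2.1)
    rw [Function.update_eq_self] at this
    rw [hv' i s]
    linarith
  · -- revenue approximation
    intro s
    set istar : Fin n := A (SQaux.qv g s) with histar
    have hmem : s istar ∈ S s istar := by
      rw [hS, hT, Finset.mem_filter]
      refine ⟨Finset.mem_univ _, le_refl _, ?_⟩
      rw [Function.update_eq_self]
    have hsingle : f istar (SQaux.qv g s)
        ≤ ∑ θ ∈ S s istar, f istar (SQaux.qv g (Function.update s istar θ)) := by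
      have h1 := Finset.single_le_sum
        (f := fun θ => f istar (SQaux.qv g (Function.update s istar θ)))
        (fun θ _ => hf_nonneg _ _) hmem
      simpa using h1
    have hne : (Finset.univ : Finset (Fin n)).Nonempty := ⟨⟨0, hn⟩, Finset.mem_univ _⟩
    have hsup : Finset.univ.sup' ⟨⟨0, hn⟩, Finset.mem_univ _⟩ (fun i => v i s)
        ≤ f istar (SQaux.qv g s) := by
      refine Finset.sup'_le _ _ ?_
      intro i _
      rw [hv' i s]
      exact hA _ i
    have hsup0 : 0 ≤ Finset.univ.sup' ⟨⟨0, hn⟩, Finset.mem_univ _⟩ (fun i => v i s) := by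
      refine le_trans ?_ (Finset.le_sup' (fun i => v i s) (Finset.mem_univ (⟨0, hn⟩ : Fin n)))
      rw [hv']
      exact hf_nonneg _ _
    have hcβ : 1 / (10 * ((k : ℝ) - 1) * (ℓ : ℝ)) ≤ β := by
      rw [hβdef]
      have hk2 : (2:ℝ) ≤ (k:ℝ) := by exact_mod_cast hk
      have hl1 : (1:ℝ) ≤ (ℓ:ℝ) := by exact_mod_cast hℓ
      have hden : (k:ℝ) * (ℓ:ℝ) ≤ 10 * ((k : ℝ) - 1) * (ℓ : ℝ) := by nlinarith
      exact one_div_le_one_div_of_le (by positivity) hden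
    calc (1 / (10 * ((k : ℝ) - 1) * (ℓ : ℝ))) *
            Finset.univ.sup' ⟨⟨0, hn⟩, Finset.mem_univ _⟩ (fun i => v i s)
        ≤ β * Finset.univ.sup' ⟨⟨0, hn⟩, Finset.mem_univ _⟩ (fun i => v i s) :=
          mul_le_mul_of_nonneg_right hcβ hsup0
      _ ≤ β * f istar (SQaux.qv g s) := mul_le_mul_of_nonneg_left hsup hβpos.le
      _ ≤ β * ∑ θ ∈ S s istar, f istar (SQaux.qv g (Function.update s istar θ)) :=
          mul_le_mul_of_nonneg_left hsingle hβpos.le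
      _ ≤ ∑ i, β * ∑ θ ∈ S s i, f i (SQaux.qv g (Function.update s i θ)) := by
          refine Finset.single_le_sum
            (f := fun i => β * ∑ θ ∈ S s i, f i (SQaux.qv g (Function.update s i θ)))
            ?_ (Finset.mem_univ istar)
          intro i _
          exact mul_nonneg hβpos.le (Finset.sum_nonneg fun θ _ => hf_nonneg _ _)
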